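/- Fix real constants c_{jk} (j,k ∈ {1,2}) and consider the polynomial three-web given by f¹ = x¹ + y¹, f² = x² + y² + ∑_{j,k} c_{jk} x^j y^k on the domain where Δ₁ := 1 + c₂₁y¹ + c₂₂y² ≠ 0 and Δ₂ := 1 + c₁₂x¹ + c₂₂x² ≠ 0. With α := c₁₁c₂₂ − c₁₂c₂₁ and β := α(x¹ − y¹) + c₁₂ − c₂₁, the isoclinicity invariants of this web satisfy p = q = c₂₂β/(2Δ₁²Δ₂²). Consequently every web of this family is nonisoclinic exactly where c₂₂β ≠ 0, and since p = q no web of this family can be extended to a nonisoclinic web W(4,2,2) (class G₃). -/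

import Mathlib

noncomputable section

open Matrix

/-- Partial derivative of `g` with respect to the `j`-th coordinate at the point `x`. -/
def pd (j : Fin 2) (g : (Fin 2 → ℝ) → ℝ) (x : Fin 2 → ℝ) : ℝ :=
  deriv (fun t => g (Function.update x j t)) (x j)

variable (f : Fin 2 → (Fin 2 → ℝ) → (Fin 2 → ℝ) → ℝ)

/-- Jacobian matrix `f̄ = (∂fⁱ/∂xʲ)` with respect to the first group of variables. -/
def fbar (x y : Fin 2 → ℝ) : Matrix (Fin 2) (Fin 2) ℝ :=
  Matrix.of fun i j => pd j (fun x' => f i x' y) x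

/-- Jacobian matrix `f̃ = (∂fⁱ/∂yʲ)` with respect to the second group of variables. -/
def ftil (x y : Fin 2 → ℝ) : Matrix (Fin 2) (Fin 2) ℝ :=
  Matrix.of fun i j => pd j (fun y' => f i x y') y

/-- Mixed second partial derivative `∂²fⁱ/∂xˡ∂yᵐ`. -/
def d2 (i l m : Fin 2) (x y : Fin 2 → ℝ) : ℝ :=
  pd m (fun y' => pd l (fun x' => f i x' y') x) y

/-- Connection coefficients
`Γⁱⱼₖ = −∑_{l,m} (∂²fⁱ/∂xˡ∂yᵐ) ḡˡⱼ g̃ᵐₖ`, where `ḡ = f̄⁻¹`, `g̃ = f̃⁻¹`. -/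
def Gam (i j k : Fin 2) (x y : Fin 2 → ℝ) : ℝ :=
  - ∑ l : Fin 2, ∑ m : Fin 2,
      d2 f i l m x y * (fbar f x y)⁻¹ l j * (ftil f x y)⁻¹ m k

/-- Torsion covector `aⱼ = ∑ₖ (Γᵏⱼₖ − Γᵏₖⱼ)`. -/
def aCov (j : Fin 2) (x y : Fin 2 → ℝ) : ℝ :=
  ∑ k : Fin 2, (Gam f k j k x y - Gam f k k j x y)

/-- Covariant derivative `p_{ik} = ∑ₘ (∂aᵢ/∂xᵐ) ḡᵐₖ − ∑ⱼ aⱼ Γʲₖᵢ`. -/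
def pCov (i k : Fin 2) (x y : Fin 2 → ℝ) : ℝ :=
  (∑ m : Fin 2, pd m (fun x' => aCov f i x' y) x * (fbar f x y)⁻¹ m k)
    - ∑ j : Fin 2, aCov f j x y * Gam f j k i x y

/-- Covariant derivative `q_{ik} = ∑ₘ (∂aᵢ/∂yᵐ) g̃ᵐₖ − ∑ⱼ aⱼ Γʲᵢₖ`. -/
def qCov (i k : Fin 2) (x y : Fin 2 → ℝ) : ℝ :=
  (∑ m : Fin 2, pd m (fun y' => aCov f i x y') y * (ftil f x y)⁻¹ m k)
    - ∑ j : Fin 2, aCov f j x y * Gam f j i k x y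

/-- Isoclinicity invariant `p = (p₁₂ − p₂₁)/2`. -/
def pIso (x y : Fin 2 → ℝ) : ℝ := (pCov f 0 1 x y - pCov f 1 0 x y) / 2

/-- Isoclinicity invariant `q = (q₁₂ − q₂₁)/2`. -/
def qIso (x y : Fin 2 → ℝ) : ℝ := (qCov f 0 1 x y - qCov f 1 0 x y) / 2


/-- The polynomial web `f¹ = x¹ + y¹`, `f² = x² + y² + ∑_{j,k} c_{jk} x^j y^k`
with fixed real constants `c_{jk}`.
(Indices: `x 0 ↦ x¹`, `x 1 ↦ x²`, `y 0 ↦ y¹`, `y 1 ↦ y²`; `c 0 0 ↦ c₁₁` etc.) -/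
noncomputable def webD (c : Fin 2 → Fin 2 → ℝ) :
    Fin 2 → (Fin 2 → ℝ) → (Fin 2 → ℝ) → ℝ :=
  ![fun x y => x 0 + y 0,
    fun x y => x 1 + y 1 + ∑ j : Fin 2, ∑ k : Fin 2, c j k * x j * y k]


lemma pd_eq {j : Fin 2} {g : (Fin 2 → ℝ) → ℝ} {x : Fin 2 → ℝ} (a b : ℝ)
    (h : ∀ t, g (Function.update x j t) = a * t + b) : pd j g x = a := by
  unfold pd
  rw [show (fun t => g (Function.update x j t)) = fun t => a * t + b from funext h]
  simpa using (((hasDerivAt_id (x j)).const_mul a).add_const b).deriv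

lemma fbar_eq (c : Fin 2 → Fin 2 → ℝ) (x y : Fin 2 → ℝ) :
    fbar (webD c) x y =
      !![1, 0; c 0 0 * y 0 + c 0 1 * y 1, 1 + c 1 0 * y 0 + c 1 1 * y 1] := by
  ext i j
  fin_cases i <;> fin_cases j <;>
    simp only [fbar, Matrix.of_apply, webD, Matrix.cons_val_zero, Matrix.cons_val_one,
      Matrix.head_cons, Fin.sum_univ_two]
  · exact pd_eq 1 (y 0) fun t => by simp [Function.update_apply]
  · exact pd_eq 0 (x 0 + y 0) fun t => by simp [Function.update_apply]
  · exact pd_eq _ (x 1 + y 1 + (c 1 0 * x 1 * y 0 + c 1 1 * x 1 * y 1)) fun t => by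
      simp [Function.update_apply]; ring
  · exact pd_eq _ (y 1 + (c 0 0 * x 0 * y 0 + c 0 1 * x 0 * y 1)) fun t => by
      simp [Function.update_apply]; ring

lemma ftil_eq (c : Fin 2 → Fin 2 → ℝ) (x y : Fin 2 → ℝ) :
    ftil (webD c) x y =
      !![1, 0; c 0 0 * x 0 + c 1 0 * x 1, 1 + c 0 1 * x 0 + c 1 1 * x 1] := by
  ext i j
  fin_cases i <;> fin_cases j <;>
    simp only [ftil, Matrix.of_apply, webD, Matrix.cons_val_zero, Matrix.cons_val_one,
      Matrix.head_cons, Fin.sum_univ_two]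
  · exact pd_eq 1 (x 0) fun t => by simp [Function.update_apply]; ring
  · exact pd_eq 0 (x 0 + y 0) fun t => by simp [Function.update_apply]
  · exact pd_eq _ (x 1 + y 1 + (c 0 1 * x 0 * y 1 + c 1 1 * x 1 * y 1)) fun t => by
      simp [Function.update_apply]; ring
  · exact pd_eq _ (x 1 + (c 0 0 * x 0 * y 0 + c 1 0 * x 1 * y 0)) fun t => by
      simp [Function.update_apply]; ring

lemma d2_zero (c : Fin 2 → Fin 2 → ℝ) (l m : Fin 2) (x y : Fin 2 → ℝ) :
    d2 (webD c) 0 l m x y = 0 := by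
  unfold d2
  rw [show (fun y' => pd l (fun x' => webD c 0 x' y') x)
      = fun y' => fbar (webD c) x y' 0 l from rfl]
  fin_cases l <;> fin_cases m
  · exact pd_eq 0 1 fun t => by rw [fbar_eq]; norm_num
  · exact pd_eq 0 1 fun t => by rw [fbar_eq]; norm_num
  · exact pd_eq 0 0 fun t => by rw [fbar_eq]; norm_num
  · exact pd_eq 0 0 fun t => by rw [fbar_eq]; norm_num

lemma d2_one (c : Fin 2 → Fin 2 → ℝ) (l m : Fin 2) (x y : Fin 2 → ℝ) :
    d2 (webD c) 1 l m x y = c l m := by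
  unfold d2
  rw [show (fun y' => pd l (fun x' => webD c 1 x' y') x)
      = fun y' => fbar (webD c) x y' 1 l from rfl]
  fin_cases l <;> fin_cases m
  · exact pd_eq _ (c 0 1 * y 1) fun t => by rw [fbar_eq]; simp [Function.update_apply]
  · exact pd_eq _ (c 0 0 * y 0) fun t => by rw [fbar_eq]; simp [Function.update_apply]; ring
  · exact pd_eq _ (1 + c 1 1 * y 1) fun t => by rw [fbar_eq]; simp [Function.update_apply]; ring
  · exact pd_eq _ (1 + c 1 0 * y 0) fun t => by rw [fbar_eq]; simp [Function.update_apply]; ring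

lemma fbar_inv (c : Fin 2 → Fin 2 → ℝ) (x y : Fin 2 → ℝ)
    (h : (1 : ℝ) + c 1 0 * y 0 + c 1 1 * y 1 ≠ 0) :
    (fbar (webD c) x y)⁻¹ =
      !![1, 0; -(c 0 0 * y 0 + c 0 1 * y 1) / (1 + c 1 0 * y 0 + c 1 1 * y 1),
          (1 + c 1 0 * y 0 + c 1 1 * y 1)⁻¹] := by
  apply Matrix.inv_eq_right_inv
  rw [fbar_eq]
  ext i j
  fin_cases i <;> fin_cases j <;>
    simp [Matrix.mul_apply, Fin.sum_univ_two] <;>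
      field_simp [show (1 + y 0 * c 1 0 + y 1 * c 1 1 : ℝ) ≠ 0 by convert h using 1; ring] <;> ring

lemma ftil_inv (c : Fin 2 → Fin 2 → ℝ) (x y : Fin 2 → ℝ)
    (h : (1 : ℝ) + c 0 1 * x 0 + c 1 1 * x 1 ≠ 0) :
    (ftil (webD c) x y)⁻¹ =
      !![1, 0; -(c 0 0 * x 0 + c 1 0 * x 1) / (1 + c 0 1 * x 0 + c 1 1 * x 1),
          (1 + c 0 1 * x 0 + c 1 1 * x 1)⁻¹] := by
  apply Matrix.inv_eq_right_inv
  rw [ftil_eq]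
  ext i j
  fin_cases i <;> fin_cases j <;>
    simp [Matrix.mul_apply, Fin.sum_univ_two] <;>
      field_simp [show (1 + x 0 * c 0 1 + x 1 * c 1 1 : ℝ) ≠ 0 by convert h using 1; ring] <;> ring

lemma Gam0 (c : Fin 2 → Fin 2 → ℝ) (j k : Fin 2) (x y : Fin 2 → ℝ) :
    Gam (webD c) 0 j k x y = 0 := by
  simp [Gam, d2_zero, Fin.sum_univ_two]

lemma aCov_one (c : Fin 2 → Fin 2 → ℝ) (x y : Fin 2 → ℝ) :
    aCov (webD c) 1 x y = 0 := by
  simp [aCov, Fin.sum_univ_two, Gam0]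

lemma aCov_zero (c : Fin 2 → Fin 2 → ℝ) (x y : Fin 2 → ℝ)
    (h1 : (1 : ℝ) + c 1 0 * y 0 + c 1 1 * y 1 ≠ 0)
    (h2 : (1 : ℝ) + c 0 1 * x 0 + c 1 1 * x 1 ≠ 0) :
    aCov (webD c) 0 x y =
      -((c 0 0 * c 1 1 - c 0 1 * c 1 0) * (x 0 - y 0) + c 0 1 - c 1 0) /
        ((1 + c 1 0 * y 0 + c 1 1 * y 1) * (1 + c 0 1 * x 0 + c 1 1 * x 1)) := by
  simp only [aCov, Fin.sum_univ_two, Gam0, Gam, d2_one, fbar_inv c x y h1, ftil_inv c x y h2]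
  norm_num [Fin.sum_univ_two]
  field_simp [show (1 + y 0 * c 1 0 + c 1 1 * y 1 : ℝ) ≠ 0 by convert h1 using 1; ring]
  ring

lemma deriv_K_inv (K a cc t : ℝ) (h : a + cc * t ≠ 0) :
    deriv (fun s => K * (a + cc * s)⁻¹) t = -(K * cc) / (a + cc * t)^2 := by
  have h1 : HasDerivAt (fun s => a + cc * s) cc t := by
    simpa using ((hasDerivAt_id t).const_mul cc).const_add a
  have h2 := (h1.inv h).const_mul K
  rw [show (fun s => K * (a + cc * s)⁻¹) = fun y => K * (fun s => a + cc * s)⁻¹ y from rfl, h2.deriv]; field_simp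

lemma pd_aCov0_x (c : Fin 2 → Fin 2 → ℝ) (x y : Fin 2 → ℝ)
    (h1 : (1 : ℝ) + c 1 0 * y 0 + c 1 1 * y 1 ≠ 0)
    (h2 : (1 : ℝ) + c 0 1 * x 0 + c 1 1 * x 1 ≠ 0) :
    pd 1 (fun x' => aCov (webD c) 0 x' y) x =
      ((c 0 0 * c 1 1 - c 0 1 * c 1 0) * (x 0 - y 0) + c 0 1 - c 1 0) * c 1 1 /
        ((1 + c 1 0 * y 0 + c 1 1 * y 1) * (1 + c 0 1 * x 0 + c 1 1 * x 1)^2) := by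
  set β := (c 0 0 * c 1 1 - c 0 1 * c 1 0) * (x 0 - y 0) + c 0 1 - c 1 0 with hβ
  set D1 := (1 : ℝ) + c 1 0 * y 0 + c 1 1 * y 1 with hD1
  have hco : ContinuousAt (fun t : ℝ => 1 + c 0 1 * x 0 + c 1 1 * t) (x 1) := by fun_prop
  have hne : ∀ᶠ t in nhds (x 1), (1 + c 0 1 * x 0 + c 1 1 * t : ℝ) ≠ 0 :=
    hco.eventually_ne (by simpa using h2)
  have hev : (fun t => aCov (webD c) 0 (Function.update x 1 t) y)
      =ᶠ[nhds (x 1)] fun t => (-β / D1) * ((1 + c 0 1 * x 0) + c 1 1 * t)⁻¹ := by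
    filter_upwards [hne] with t ht
    rw [aCov_zero c _ y h1 (by simpa [Function.update_apply] using ht)]
    rw [show Function.update x 1 t 0 = x 0 from rfl, show Function.update x 1 t 1 = t from rfl]
    rw [div_eq_iff (by apply mul_ne_zero h1; simpa using ht)]
    field_simp
    ring
  unfold pd
  rw [hev.deriv_eq, deriv_K_inv _ _ _ _ h2]
  rw [div_eq_div_iff (by positivity) (by apply mul_ne_zero h1; positivity)]
  field_simp

lemma pd_aCov0_y (c : Fin 2 → Fin 2 → ℝ) (x y : Fin 2 → ℝ)
    (h1 : (1 : ℝ) + c 1 0 * y 0 + c 1 1 * y 1 ≠ 0)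
    (h2 : (1 : ℝ) + c 0 1 * x 0 + c 1 1 * x 1 ≠ 0) :
    pd 1 (fun y' => aCov (webD c) 0 x y') y =
      ((c 0 0 * c 1 1 - c 0 1 * c 1 0) * (x 0 - y 0) + c 0 1 - c 1 0) * c 1 1 /
        ((1 + c 1 0 * y 0 + c 1 1 * y 1)^2 * (1 + c 0 1 * x 0 + c 1 1 * x 1)) := by
  set β := (c 0 0 * c 1 1 - c 0 1 * c 1 0) * (x 0 - y 0) + c 0 1 - c 1 0 with hβ
  set D2 := (1 : ℝ) + c 0 1 * x 0 + c 1 1 * x 1 with hD2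
  have hco : ContinuousAt (fun t : ℝ => 1 + c 1 0 * y 0 + c 1 1 * t) (y 1) := by fun_prop
  have hne : ∀ᶠ t in nhds (y 1), (1 + c 1 0 * y 0 + c 1 1 * t : ℝ) ≠ 0 :=
    hco.eventually_ne (by simpa using h1)
  have hev : (fun t => aCov (webD c) 0 x (Function.update y 1 t))
      =ᶠ[nhds (y 1)] fun t => (-β / D2) * ((1 + c 1 0 * y 0) + c 1 1 * t)⁻¹ := by
    filter_upwards [hne] with t ht
    rw [aCov_zero c x _ (by simpa [Function.update_apply] using ht) h2]
    rw [show Function.update y 1 t 0 = y 0 from rfl, show Function.update y 1 t 1 = t from rfl]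
    rw [div_eq_iff (by apply mul_ne_zero _ h2; simpa using ht)]
    field_simp
    ring
  unfold pd
  rw [hev.deriv_eq, deriv_K_inv _ _ _ _ h1]
  rw [div_eq_div_iff (by positivity) (by apply mul_ne_zero _ h2; positivity)]
  field_simp


/-- For the polynomial web `webD c` on the domain
`Δ₁ = 1 + c₂₁y¹ + c₂₂y² ≠ 0`, `Δ₂ = 1 + c₁₂x¹ + c₂₂x² ≠ 0`, with
`α = c₁₁c₂₂ − c₁₂c₂₁` and `β = α(x¹ − y¹) + c₁₂ − c₂₁`, the isoclinicity
invariants satisfy `p = q = c₂₂β/(2Δ₁²Δ₂²)`.  Consequently the web is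
nonisoclinic exactly where `c₂₂β ≠ 0`, and since `p = q` no web of this family
can be extended to a nonisoclinic web `W(4,2,2)` (class G₃). -/
theorem webD_isoclinicity_invariants (c : Fin 2 → Fin 2 → ℝ) (x y : Fin 2 → ℝ)
    (Δ₁ Δ₂ α β : ℝ)
    (hΔ₁ : Δ₁ = 1 + c 1 0 * y 0 + c 1 1 * y 1)
    (hΔ₂ : Δ₂ = 1 + c 0 1 * x 0 + c 1 1 * x 1)
    (hα : α = c 0 0 * c 1 1 - c 0 1 * c 1 0)
    (hβ : β = α * (x 0 - y 0) + c 0 1 - c 1 0)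
    (h1 : Δ₁ ≠ 0) (h2 : Δ₂ ≠ 0) :
    pIso (webD c) x y = c 1 1 * β / (2 * Δ₁^2 * Δ₂^2) ∧
    qIso (webD c) x y = c 1 1 * β / (2 * Δ₁^2 * Δ₂^2) ∧
    ((pIso (webD c) x y)^2 + (qIso (webD c) x y)^2 > 0 ↔ c 1 1 * β ≠ 0) := by
  subst hα hβ hΔ₁ hΔ₂
  have hz1 : ∀ m : Fin 2, pd m (fun x' => aCov (webD c) 1 x' y) x = 0 :=
    fun m => pd_eq 0 0 fun t => by simp [aCov_one]
  have hz2 : ∀ m : Fin 2, pd m (fun y' => aCov (webD c) 1 x y') y = 0 :=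
    fun m => pd_eq 0 0 fun t => by simp [aCov_one]
  have hp : pIso (webD c) x y =
      c 1 1 * ((c 0 0 * c 1 1 - c 0 1 * c 1 0) * (x 0 - y 0) + c 0 1 - c 1 0) /
        (2 * (1 + c 1 0 * y 0 + c 1 1 * y 1)^2 * (1 + c 0 1 * x 0 + c 1 1 * x 1)^2) := by
    unfold pIso pCov
    simp only [Fin.sum_univ_two]
    rw [fbar_inv c x y h1, pd_aCov0_x c x y h1 h2, hz1 0, hz1 1]
    simp [Gam0, aCov_one]
    rw [div_eq_div_iff (by positivity) (by positivity)]
    field_simp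
  have hq : qIso (webD c) x y =
      c 1 1 * ((c 0 0 * c 1 1 - c 0 1 * c 1 0) * (x 0 - y 0) + c 0 1 - c 1 0) /
        (2 * (1 + c 1 0 * y 0 + c 1 1 * y 1)^2 * (1 + c 0 1 * x 0 + c 1 1 * x 1)^2) := by
    unfold qIso qCov
    simp only [Fin.sum_univ_two]
    rw [ftil_inv c x y h2, pd_aCov0_y c x y h1 h2, hz2 0, hz2 1]
    simp [Gam0, aCov_one]
    rw [div_eq_div_iff (by positivity) (by positivity)]
    field_simp
  refine ⟨hp, hq, ?_⟩
  rw [hp, hq]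
  set β := (c 0 0 * c 1 1 - c 0 1 * c 1 0) * (x 0 - y 0) + c 0 1 - c 1 0
  set E := c 1 1 * β /
      (2 * (1 + c 1 0 * y 0 + c 1 1 * y 1)^2 * (1 + c 0 1 * x 0 + c 1 1 * x 1)^2) with hE
  constructor
  · intro hgt h0
    rw [hE, h0] at hgt
    norm_num at hgt
  · intro h0
    have hEne : E ≠ 0 := by
      rw [hE]
      exact div_ne_zero h0 (by positivity)
    have h3 : 0 < E^2 := lt_of_le_of_ne (sq_nonneg E) (Ne.symm (pow_ne_zero 2 hEne))
    linarith

end
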